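/- arXiv:0908.0555 — 2 statements merged into one kernel-verified Lean document; each statement's English description precedes it below -/
import Mathlib

section
/- Fix g ≥ 1 and even L ≥ 2. The map sending I_{2g} + L·[[A, B],[C, D]] ∈ Sp_{2g}(ℤ, L) (block decomposition into g×g blocks) to the vector in (ℤ/2)^{2g} whose entries are the diagonal entries of B and C reduced mod 2 is a surjective group homomorphism Sp_{2g}(ℤ, L) → (ℤ/2)^{2g}, whose kernel is the subgroup Sp_{2g}(ℤ, L, 2L) of matrices [[A', B'],[C', D']] ∈ Sp_{2g}(ℤ, L) whose blocks B' and C' have all diagonal entries divisible by 2L. -/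
open Matrix

abbrev Idx (g : ℕ) := Fin g ⊕ Fin g

/-- The standard symplectic matrix `Ω_g = [[0, I_g], [-I_g, 0]]`. -/
def Omega (g : ℕ) (R : Type*) [CommRing R] : Matrix (Idx g) (Idx g) R :=
  Matrix.fromBlocks 0 1 (-1) 0

/-- `X` is a symplectic matrix: `Xᵀ Ω X = Ω`. -/
def IsSymp (g : ℕ) (R : Type*) [CommRing R] (X : Matrix (Idx g) (Idx g) R) : Prop :=
  Xᵀ * Omega g R * X = Omega g R

/-- `M` is congruent to the identity mod `L`. -/
def IsLevel (g L : ℕ) (M : Matrix (Idx g) (Idx g) ℤ) : Prop :=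
  M.map (Int.cast : ℤ → ZMod L) = 1

/-- For `M = I + L·[[A,B],[C,D]] ∈ Sp_{2g}(ℤ, L)`, the vector in `(ℤ/2)^{2g}` of the diagonal
entries of `B` and of `C`, reduced mod 2. -/
def igusaMap (g L : ℕ) (M : Matrix (Idx g) (Idx g) ℤ) : Idx g → ZMod 2 := fun idx =>
  match idx with
  | Sum.inl i =>
      ((((M - 1).map (fun x => x / (L : ℤ))) (Sum.inl i) (Sum.inr i) : ℤ) : ZMod 2)
  | Sum.inr i =>
      ((((M - 1).map (fun x => x / (L : ℤ))) (Sum.inr i) (Sum.inl i) : ℤ) : ZMod 2)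

-- helper: entries of M-1 divisible by L
lemma level_dvd {g L : ℕ} {M : Matrix (Idx g) (Idx g) ℤ} (h : IsLevel g L M)
    (i j : Idx g) : (L : ℤ) ∣ (M - 1) i j := by
  have := congrFun (congrFun h i) j
  rw [Matrix.map_apply] at this
  have : ((M - 1) i j : ZMod L) = 0 := by
    simp only [Matrix.sub_apply, Int.cast_sub, this]
    rcases eq_or_ne i j with rfl | hij
    · simp [Matrix.one_apply_eq]
    · simp [Matrix.one_apply_ne hij]
  exact (ZMod.intCast_zmod_eq_zero_iff_dvd _ _).mp this



lemma isSymp_mul {g : ℕ} {M N : Matrix (Idx g) (Idx g) ℤ} (hM : IsSymp g ℤ M)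
    (hN : IsSymp g ℤ N) : IsSymp g ℤ (M * N) := by
  unfold IsSymp at *
  rw [Matrix.transpose_mul]
  calc Nᵀ * Mᵀ * Omega g ℤ * (M * N) = Nᵀ * (Mᵀ * Omega g ℤ * M) * N := by
        noncomm_ring
    _ = Omega g ℤ := by rw [hM, hN]

lemma isLevel_mul {g L : ℕ} {M N : Matrix (Idx g) (Idx g) ℤ} (hM : IsLevel g L M)
    (hN : IsLevel g L N) : IsLevel g L (M * N) := by
  unfold IsLevel at *
  rw [show (Int.cast : ℤ → ZMod L) = (Int.castRingHom (ZMod L) : ℤ → ZMod L) from rfl] at *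
  rw [Matrix.map_mul, hM, hN, one_mul]

lemma isLevel_upper (g L : ℕ) (b : Fin g → ℤ) :
    IsLevel g L (Matrix.fromBlocks 1 (Matrix.diagonal fun i => (L : ℤ) * b i) 0 1) := by
  unfold IsLevel
  ext i j
  rcases i with i | i <;> rcases j with j | j <;>
    simp [Matrix.map_apply, Matrix.one_apply, Matrix.diagonal_apply, apply_ite] <;>
    (try (split_ifs with h <;> simp [h]))

lemma isLevel_lower (g L : ℕ) (c : Fin g → ℤ) :
    IsLevel g L (Matrix.fromBlocks 1 0 (Matrix.diagonal fun i => (L : ℤ) * c i) 1) := by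
  unfold IsLevel
  ext i j
  rcases i with i | i <;> rcases j with j | j <;>
    simp [Matrix.map_apply, Matrix.one_apply, Matrix.diagonal_apply, apply_ite] <;>
    (try (split_ifs with h <;> simp [h]))

-- arithmetic key lemma
lemma key (L : ℕ) (hL0 : (L:ℤ) ≠ 0) (hev : 2 ∣ L) {a b c : ℤ}
    (ha : (L:ℤ) ∣ a) (hb : (L:ℤ) ∣ b) (hc : (L:ℤ)*(L:ℤ) ∣ c) :
    (((a+b+c)/(L:ℤ) : ℤ) : ZMod 2) = ((a/(L:ℤ) : ℤ) : ZMod 2) + ((b/(L:ℤ) : ℤ) : ZMod 2) := by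
  obtain ⟨a', rfl⟩ := ha
  obtain ⟨b', rfl⟩ := hb
  obtain ⟨c', rfl⟩ := hc
  have hLz : ((L:ℕ) : ZMod 2) = 0 :=
    (ZMod.natCast_eq_zero_iff L 2).mpr hev
  rw [show (L:ℤ)*a' + (L:ℤ)*b' + (L:ℤ)*(L:ℤ)*c' = (L:ℤ)*(a' + b' + (L:ℤ)*c') by ring]
  rw [Int.mul_ediv_cancel_left _ hL0, Int.mul_ediv_cancel_left _ hL0,
    Int.mul_ediv_cancel_left _ hL0]
  push_cast
  simp [hLz]

lemma kernel_entry (L : ℕ) (hL0 : (L:ℤ) ≠ 0) {e : ℤ} (he : (L:ℤ) ∣ e) :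
    ((e/(L:ℤ) : ℤ) : ZMod 2) = 0 ↔ (2 * L : ℤ) ∣ e := by
  obtain ⟨k, rfl⟩ := he
  rw [Int.mul_ediv_cancel_left _ hL0, ZMod.intCast_zmod_eq_zero_iff_dvd]
  constructor
  · rintro ⟨m, rfl⟩; exact ⟨m, by ring⟩
  · rintro ⟨m, hm⟩
    refine ⟨m, ?_⟩
    have : (L:ℤ) * k = (L:ℤ) * (2 * m) := by linarith [hm]
    exact mul_left_cancel₀ hL0 this

-- symplectic upper/lower block matrices
lemma isSymp_upper (g : ℕ) (b : Fin g → ℤ) :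
    IsSymp g ℤ (Matrix.fromBlocks 1 (Matrix.diagonal b) 0 1) := by
  simp [IsSymp, Omega, Matrix.fromBlocks_transpose, Matrix.fromBlocks_multiply]

lemma isSymp_lower (g : ℕ) (c : Fin g → ℤ) :
    IsSymp g ℤ (Matrix.fromBlocks 1 0 (Matrix.diagonal c) 1) := by
  simp [IsSymp, Omega, Matrix.fromBlocks_transpose, Matrix.fromBlocks_multiply]

lemma part1_entry {g L : ℕ} (hL0 : (L:ℤ) ≠ 0) (hev : 2 ∣ L)
    {M N : Matrix (Idx g) (Idx g) ℤ} (hM : IsLevel g L M) (hN : IsLevel g L N)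
    (i j : Idx g) :
    (((M*N - 1) i j / (L:ℤ) : ℤ) : ZMod 2) =
      (((M-1) i j / (L:ℤ) : ℤ) : ZMod 2) + (((N-1) i j / (L:ℤ) : ℤ) : ZMod 2) := by
  have hid : M*N - 1 = (M-1) + (N-1) + (M-1)*(N-1) := by noncomm_ring
  have hentry : (M*N - 1) i j = (M-1) i j + (N-1) i j + ((M-1)*(N-1)) i j := by
    rw [hid]; simp [Matrix.add_apply]
  rw [hentry]
  refine key L hL0 hev (level_dvd hM i j) (level_dvd hN i j) ?_
  rw [Matrix.mul_apply]
  exact Finset.dvd_sum fun k _ => mul_dvd_mul (level_dvd hM i k) (level_dvd hN k j)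

/-- For even `L`, the map `I + L·[[A,B],[C,D]] ↦ (diag B, diag C) mod 2` is a surjective
group homomorphism `Sp_{2g}(ℤ, L) → (ℤ/2)^{2g}` with kernel `Sp_{2g}(ℤ, L, 2L)`, the set of
level-`L` matrices whose off-diagonal blocks have diagonal entries divisible by `2L`. -/
theorem igusaMap_surjective_hom (g L : ℕ) (hg : 1 ≤ g) (hL : 2 ≤ L) (heven : 2 ∣ L) :
    -- homomorphism
    (∀ M N : Matrix (Idx g) (Idx g) ℤ, IsSymp g ℤ M → IsSymp g ℤ N →
      IsLevel g L M → IsLevel g L N →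
      igusaMap g L (M * N) = igusaMap g L M + igusaMap g L N) ∧
    -- surjectivity
    (∀ v : Idx g → ZMod 2, ∃ M : Matrix (Idx g) (Idx g) ℤ,
      IsSymp g ℤ M ∧ IsLevel g L M ∧ igusaMap g L M = v) ∧
    -- the kernel is `Sp_{2g}(ℤ, L, 2L)`
    (∀ M : Matrix (Idx g) (Idx g) ℤ, IsSymp g ℤ M → IsLevel g L M →
      (igusaMap g L M = 0 ↔
        ∀ i : Fin g, ((2 * L : ℤ) ∣ M (Sum.inl i) (Sum.inr i)) ∧
          ((2 * L : ℤ) ∣ M (Sum.inr i) (Sum.inl i)))) := by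
  have hL0 : (L:ℤ) ≠ 0 := by positivity
  have part1 : ∀ M N : Matrix (Idx g) (Idx g) ℤ, IsLevel g L M → IsLevel g L N →
      igusaMap g L (M * N) = igusaMap g L M + igusaMap g L N := by
    intro M N hM hN
    funext idx
    rcases idx with i | i <;>
    · simp only [igusaMap, Pi.add_apply, Matrix.map_apply]
      exact part1_entry hL0 heven hM hN _ _
  refine ⟨fun M N _ _ hM hN => part1 M N hM hN, ?_, ?_⟩
  · -- surjectivity
    intro v
    set b : Fin g → ℤ := fun i => ((v (Sum.inl i)).val : ℤ) with hb
    set c : Fin g → ℤ := fun i => ((v (Sum.inr i)).val : ℤ) with hc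
    set U : Matrix (Idx g) (Idx g) ℤ :=
      Matrix.fromBlocks 1 (Matrix.diagonal fun i => (L : ℤ) * b i) 0 1 with hU
    set W : Matrix (Idx g) (Idx g) ℤ :=
      Matrix.fromBlocks 1 0 (Matrix.diagonal fun i => (L : ℤ) * c i) 1 with hW
    have hUl : IsLevel g L U := isLevel_upper g L b
    have hWl : IsLevel g L W := isLevel_lower g L c
    refine ⟨U * W, isSymp_mul (isSymp_upper g _) (isSymp_lower g _),
      isLevel_mul hUl hWl, ?_⟩
    rw [part1 U W hUl hWl]
    funext idx
    have hone_lr : ∀ i : Fin g, (1 : Matrix (Idx g) (Idx g) ℤ) (Sum.inl i) (Sum.inr i) = 0 :=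
      fun i => Matrix.one_apply_ne (by simp)
    have hone_rl : ∀ i : Fin g, (1 : Matrix (Idx g) (Idx g) ℤ) (Sum.inr i) (Sum.inl i) = 0 :=
      fun i => Matrix.one_apply_ne (by simp)
    rcases idx with i | i
    · simp [igusaMap, Matrix.map_apply, Matrix.sub_apply, hU, hW, hone_lr,
        Int.mul_ediv_cancel_left _ hL0, hb, ZMod.natCast_val, ZMod.cast_id]
    · simp [igusaMap, Matrix.map_apply, Matrix.sub_apply, hU, hW, hone_rl,
        Int.mul_ediv_cancel_left _ hL0, hc, ZMod.natCast_val, ZMod.cast_id]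
  · -- kernel
    intro M _ hM
    have hlr : ∀ i : Fin g, (M - 1) (Sum.inl i) (Sum.inr i) = M (Sum.inl i) (Sum.inr i) := by
      intro i; simp [Matrix.sub_apply, Matrix.one_apply_ne (show (Sum.inl i : Idx g) ≠ Sum.inr i by simp)]
    have hrl : ∀ i : Fin g, (M - 1) (Sum.inr i) (Sum.inl i) = M (Sum.inr i) (Sum.inl i) := by
      intro i; simp [Matrix.sub_apply, Matrix.one_apply_ne (show (Sum.inr i : Idx g) ≠ Sum.inl i by simp)]
    constructor
    · intro h0 i
      have h1 := congrFun h0 (Sum.inl i)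
      have h2 := congrFun h0 (Sum.inr i)
      simp only [igusaMap, Matrix.map_apply, Pi.zero_apply] at h1 h2
      constructor
      · rw [← hlr i]
        exact (kernel_entry L hL0 (level_dvd hM _ _)).mp h1
      · rw [← hrl i]
        exact (kernel_entry L hL0 (level_dvd hM _ _)).mp h2
    · intro hdvd
      funext idx
      rcases idx with i | i
      · simp only [igusaMap, Matrix.map_apply, Pi.zero_apply]
        exact (kernel_entry L hL0 (level_dvd hM _ _)).mpr (by rw [hlr i]; exact (hdvd i).1)
      · simp only [igusaMap, Matrix.map_apply, Pi.zero_apply]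
        exact (kernel_entry L hL0 (level_dvd hM _ _)).mpr (by rw [hrl i]; exact (hdvd i).2)
end

section
/- For even L, the subgroup Sp_{2g}(ℤ, L, 2L) is a normal subgroup of Sp_{2g}(ℤ). -/
open Matrix

/-- Membership in Igusa's subgroup `Sp_{2g}(ℤ, L, 2L)`: a symplectic matrix congruent to the
identity mod `L` whose `B` and `C` blocks have all diagonal entries divisible by `2L`. -/
def InSpL2L (g L : ℕ) (X : Matrix (Idx g) (Idx g) ℤ) : Prop :=
  IsSymp g ℤ X ∧ IsLevel g L X ∧
    ∀ i : Fin g, ((2 * L : ℤ) ∣ X (Sum.inl i) (Sum.inr i)) ∧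
      ((2 * L : ℤ) ∣ X (Sum.inr i) (Sum.inl i))


lemma omega_mul_neg (g : ℕ) (R : Type*) [CommRing R] : Omega g R * (-Omega g R) = 1 := by
  simp [Omega, Matrix.fromBlocks_multiply, Matrix.fromBlocks_neg, ← Matrix.fromBlocks_one]

lemma omega_transpose (g : ℕ) (R : Type*) [CommRing R] : (Omega g R)ᵀ = -(Omega g R) := by
  simp [Omega, Matrix.fromBlocks_transpose, Matrix.fromBlocks_neg]

lemma isUnit_det_of_isSymp {g : ℕ} {X : Matrix (Idx g) (Idx g) ℤ} (h : IsSymp g ℤ X) :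
    IsUnit X.det := by
  have hΩ : (Omega g ℤ).det ≠ 0 := by
    have := omega_mul_neg g ℤ
    have hd : (Omega g ℤ).det * (-(Omega g ℤ)).det = 1 := by
      rw [← Matrix.det_mul, this, Matrix.det_one]
    intro h0; rw [h0, zero_mul] at hd; exact one_ne_zero hd.symm
  have hdet : X.det * X.det = 1 := by
    have := congrArg Matrix.det h
    rw [Matrix.det_mul, Matrix.det_mul, Matrix.det_transpose] at this
    have : (Omega g ℤ).det * (X.det * X.det) = (Omega g ℤ).det * 1 := by ring_nf; linarith [this]
    exact mul_left_cancel₀ hΩ this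
  exact IsUnit.of_mul_eq_one _ hdet

lemma isSymp_one (g : ℕ) (R : Type*) [CommRing R] : IsSymp g R 1 := by
  simp [IsSymp]

lemma isSymp_mul_s14 {g : ℕ} {R : Type*} [CommRing R] {X Y : Matrix (Idx g) (Idx g) R}
    (hX : IsSymp g R X) (hY : IsSymp g R Y) : IsSymp g R (X * Y) := by
  unfold IsSymp at *
  rw [Matrix.transpose_mul]
  calc Yᵀ * Xᵀ * Omega g R * (X * Y) = Yᵀ * (Xᵀ * Omega g R * X) * Y := by
        simp only [Matrix.mul_assoc]
    _ = Yᵀ * Omega g R * Y := by rw [hX]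
    _ = Omega g R := hY

lemma mul_inv_symp {g : ℕ} {X : Matrix (Idx g) (Idx g) ℤ} (h : IsSymp g ℤ X) :
    X * X⁻¹ = 1 := Matrix.mul_nonsing_inv _ (isUnit_det_of_isSymp h)

lemma inv_mul_symp {g : ℕ} {X : Matrix (Idx g) (Idx g) ℤ} (h : IsSymp g ℤ X) :
    X⁻¹ * X = 1 := Matrix.nonsing_inv_mul _ (isUnit_det_of_isSymp h)

lemma isSymp_inv {g : ℕ} {X : Matrix (Idx g) (Idx g) ℤ} (h : IsSymp g ℤ X) :
    IsSymp g ℤ X⁻¹ := by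
  unfold IsSymp
  calc (X⁻¹)ᵀ * Omega g ℤ * X⁻¹ = (X⁻¹)ᵀ * (Xᵀ * Omega g ℤ * X) * X⁻¹ := by rw [h]
    _ = (X * X⁻¹)ᵀ * Omega g ℤ * (X * X⁻¹) := by
        rw [Matrix.transpose_mul]; simp only [Matrix.mul_assoc]
    _ = Omega g ℤ := by rw [mul_inv_symp h]; simp

lemma diag_conj_zero {n : Type*} [Fintype n] [DecidableEq n]
    (S P : Matrix n n (ZMod 2)) (hS : Sᵀ = S) (hd : ∀ j, S j j = 0) (p : n) :
    (Pᵀ * S * P) p p = 0 := by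
  have expand : (Pᵀ * S * P) p p
      = ∑ a ∈ Finset.univ ×ˢ (Finset.univ : Finset n), P a.2 p * S a.2 a.1 * P a.1 p := by
    rw [Finset.sum_product]
    rw [Matrix.mul_apply]
    congr 1; ext k
    rw [Matrix.mul_apply, Finset.sum_mul]
    simp [Matrix.transpose_apply]
  rw [expand]
  refine Finset.sum_involution (fun a _ => (a.2, a.1)) ?_ ?_ ?_ ?_
  · intro a _
    have hsym : S a.1 a.2 = S a.2 a.1 := congrFun (congrFun hS a.2) a.1
    have heq : P a.1 p * S a.1 a.2 * P a.2 p = P a.2 p * S a.2 a.1 * P a.1 p := by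
      rw [hsym]; ring
    rw [← heq]
    have h2 : ∀ x : ZMod 2, x + x = 0 := by decide
    exact h2 _
  · intro a _ hne
    intro hcontra
    apply hne
    have h1 : a.2 = a.1 := congrArg Prod.fst hcontra
    rw [h1, hd, mul_zero, zero_mul]
  · intro a _; simp
  · intro a _; rfl

lemma omega_mul_inl {g : ℕ} {R : Type*} [CommRing R] (N : Matrix (Idx g) (Idx g) R)
    (i : Fin g) (q : Idx g) : (Omega g R * N) (Sum.inl i) q = N (Sum.inr i) q := by
  rw [Matrix.mul_apply]
  simp [Omega, Fintype.sum_sum_type, Matrix.one_apply]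

lemma omega_mul_inr {g : ℕ} {R : Type*} [CommRing R] (N : Matrix (Idx g) (Idx g) R)
    (i : Fin g) (q : Idx g) : (Omega g R * N) (Sum.inr i) q = -N (Sum.inl i) q := by
  rw [Matrix.mul_apply]
  simp [Omega, Fintype.sum_sum_type, Matrix.one_apply]

lemma key_s14 {g : ℕ} (m y w : Matrix (Idx g) (Idx g) (ZMod 2))
    (hm : mᵀ * Omega g (ZMod 2) + Omega g (ZMod 2) * m = 0)
    (hy : IsSymp g (ZMod 2) y) (hyw : y * w = 1)
    (hd : ∀ i : Fin g, m (Sum.inl i) (Sum.inr i) = 0 ∧ m (Sum.inr i) (Sum.inl i) = 0)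
    (i : Fin g) :
    (y * m * w) (Sum.inl i) (Sum.inr i) = 0 ∧ (y * m * w) (Sum.inr i) (Sum.inl i) = 0 := by
  set J := Omega g (ZMod 2) with hJ
  have hwy : w * y = 1 := mul_eq_one_comm.mp hyw
  have hanti : mᵀ * J = -(J * m) := eq_neg_of_add_eq_zero_left hm
  have hSsym : (J * m)ᵀ = J * m := by
    rw [Matrix.transpose_mul, hJ, omega_transpose, Matrix.mul_neg, ← hJ, hanti, neg_neg]
  have hSdiag : ∀ p, (J * m) p p = 0 := by
    intro p
    cases p with
    | inl i => rw [hJ, omega_mul_inl]; exact (hd i).2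
    | inr i => rw [hJ, omega_mul_inr, (hd i).1, neg_zero]
  have hwsymp : wᵀ * J * w = J := by
    have hy' : yᵀ * J * y = J := hy
    calc wᵀ * J * w = wᵀ * (yᵀ * J * y) * w := by rw [hy']
      _ = (y * w)ᵀ * J * (y * w) := by
          rw [Matrix.transpose_mul]; simp only [Matrix.mul_assoc]
      _ = J := by rw [hyw]; simp
  have hJy : J * y = wᵀ * J := by
    calc J * y = wᵀ * J * w * y := by rw [hwsymp]
      _ = wᵀ * J * (w * y) := by simp only [Matrix.mul_assoc]
      _ = wᵀ * J := by rw [hwy, mul_one]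
  have hT : J * (y * m * w) = wᵀ * (J * m) * w := by
    calc J * (y * m * w) = J * y * m * w := by simp only [Matrix.mul_assoc]
      _ = wᵀ * J * m * w := by rw [hJy]
      _ = wᵀ * (J * m) * w := by simp only [Matrix.mul_assoc]
  have hTd : ∀ p, (J * (y * m * w)) p p = 0 := by
    rw [hT]; exact fun p => diag_conj_zero (J * m) w hSsym hSdiag p
  constructor
  · have h1 := hTd (Sum.inr i)
    rw [hJ, omega_mul_inr] at h1
    simpa using h1
  · have h2 := hTd (Sum.inl i)
    rw [hJ, omega_mul_inl] at h2
    exact h2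

lemma omega_map (g : ℕ) (R : Type*) [CommRing R] :
    (Omega g ℤ).map (Int.castRingHom R) = Omega g R := by
  have hneg : ((-1 : Matrix (Fin g) (Fin g) ℤ)).map (fun x => (x : R)) = -1 := by
    ext p q; by_cases h : p = q <;> simp [Matrix.one_apply, h]
  simp [Omega, Matrix.fromBlocks_map, Matrix.map_zero, Matrix.map_one, hneg]

lemma isLevel_iff {g L : ℕ} {X : Matrix (Idx g) (Idx g) ℤ} :
    IsLevel g L X ↔ ∀ p q : Idx g, (L : ℤ) ∣ (X - 1) p q := by
  unfold IsLevel
  rw [← Matrix.ext_iff]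
  refine forall₂_congr fun p q => ?_
  rw [Matrix.map_apply, ← ZMod.intCast_zmod_eq_zero_iff_dvd]
  have h1 : (((1 : Matrix (Idx g) (Idx g) ℤ) p q : ℤ) : ZMod L)
      = (1 : Matrix (Idx g) (Idx g) (ZMod L)) p q := by
    by_cases h : p = q <;> simp [Matrix.one_apply, h]
  rw [Matrix.sub_apply, Int.cast_sub, h1, sub_eq_zero]

lemma offdiag_entry {g : ℕ} (N : Matrix (Idx g) (Idx g) ℤ) {p q : Idx g} (h : p ≠ q) :
    (N - 1) p q = N p q := by
  simp [Matrix.sub_apply, Matrix.one_apply_ne h]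



lemma isLevel_iff' {g L : ℕ} {X : Matrix (Idx g) (Idx g) ℤ} :
    IsLevel g L X ↔ (Int.castRingHom (ZMod L)).mapMatrix X = 1 := Iff.rfl

lemma isLevel_mul_s14 {g L : ℕ} {X Y : Matrix (Idx g) (Idx g) ℤ}
    (hX : IsLevel g L X) (hY : IsLevel g L Y) : IsLevel g L (X * Y) := by
  rw [isLevel_iff'] at *
  rw [ _root_.map_mul, hX, hY, one_mul]

lemma isSymp_map {g : ℕ} {R : Type*} [CommRing R] {Y : Matrix (Idx g) (Idx g) ℤ}
    (hY : IsSymp g ℤ Y) : IsSymp g R ((Int.castRingHom R).mapMatrix Y) := by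
  unfold IsSymp at *
  have ht : ((Int.castRingHom R).mapMatrix Y)ᵀ = (Int.castRingHom R).mapMatrix Yᵀ := by
    simp [RingHom.mapMatrix_apply, Matrix.transpose_map]
  rw [ht, ← omega_map g R, ← RingHom.mapMatrix_apply, ←  _root_.map_mul, ←  _root_.map_mul, hY]

/-- For even `L`, `Sp_{2g}(ℤ, L, 2L)` is a normal subgroup of `Sp_{2g}(ℤ)`: it contains the
identity, is closed under products and inverses, and is stable under conjugation by
arbitrary elements of `Sp_{2g}(ℤ)`. -/
theorem spL2L_normal (g L : ℕ) (hL : 2 ≤ L) (heven : 2 ∣ L) :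
    InSpL2L g L 1 ∧
    (∀ X Y : Matrix (Idx g) (Idx g) ℤ, InSpL2L g L X → InSpL2L g L Y →
      InSpL2L g L (X * Y)) ∧
    (∀ X : Matrix (Idx g) (Idx g) ℤ, InSpL2L g L X → InSpL2L g L X⁻¹) ∧
    (∀ X Y : Matrix (Idx g) (Idx g) ℤ, InSpL2L g L X → IsSymp g ℤ Y →
      InSpL2L g L (Y * X * Y⁻¹)) := by
  have hL0 : (L : ℤ) ≠ 0 := by
    have : L ≠ 0 := by omega
    exact_mod_cast this
  obtain ⟨l, hl⟩ := heven
  have hlZ : (L : ℤ) = 2 * l := by exact_mod_cast hl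
  have h2LLL : (2 * (L : ℤ)) ∣ (L : ℤ) * (L : ℤ) := ⟨l, by rw [hlZ]; ring⟩
  refine ⟨?_, ?_, ?_, ?_⟩
  · -- identity
    refine ⟨isSymp_one g ℤ, Matrix.map_one _ Int.cast_zero Int.cast_one, ?_⟩
    intro i
    constructor <;>
      · rw [Matrix.one_apply_ne (by simp)]; exact dvd_zero _
  · -- product
    rintro X Y ⟨hXs, hXl, hXd⟩ ⟨hYs, hYl, hYd⟩
    refine ⟨isSymp_mul_s14 hXs hYs, isLevel_mul_s14 hXl hYl, ?_⟩
    have hXdvd := isLevel_iff.mp hXl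
    have hYdvd := isLevel_iff.mp hYl
    have hfact : X * Y - 1 = (X - 1) * (Y - 1) + (X - 1) + (Y - 1) := by noncomm_ring
    have hprod : ∀ p q : Idx g, (2 * (L : ℤ)) ∣ ((X - 1) * (Y - 1)) p q := by
      intro p q
      rw [Matrix.mul_apply]
      exact Finset.dvd_sum fun k _ =>
        dvd_trans h2LLL (mul_dvd_mul (hXdvd p k) (hYdvd k q))
    intro i
    constructor
    · have hne : (Sum.inl i : Idx g) ≠ Sum.inr i := Sum.inl_ne_inr
      rw [← offdiag_entry (X * Y) hne, hfact]
      simp only [Matrix.add_apply]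
      exact dvd_add (dvd_add (hprod _ _)
        (by rw [offdiag_entry X hne]; exact (hXd i).1))
        (by rw [offdiag_entry Y hne]; exact (hYd i).1)
    · have hne : (Sum.inr i : Idx g) ≠ Sum.inl i := Sum.inr_ne_inl
      rw [← offdiag_entry (X * Y) hne, hfact]
      simp only [Matrix.add_apply]
      exact dvd_add (dvd_add (hprod _ _)
        (by rw [offdiag_entry X hne]; exact (hXd i).2))
        (by rw [offdiag_entry Y hne]; exact (hYd i).2)
  · -- inverse
    rintro X ⟨hXs, hXl, hXd⟩
    have hXW : X * X⁻¹ = 1 := mul_inv_symp hXs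
    have hWl : IsLevel g L X⁻¹ := by
      rw [isLevel_iff'] at *
      have hWX : X⁻¹ * X = 1 := inv_mul_symp hXs
      calc (Int.castRingHom (ZMod L)).mapMatrix X⁻¹
          = (Int.castRingHom (ZMod L)).mapMatrix X⁻¹ * (Int.castRingHom (ZMod L)).mapMatrix X := by
            rw [hXl, mul_one]
        _ = (Int.castRingHom (ZMod L)).mapMatrix (X⁻¹ * X) := by rw [ _root_.map_mul]
        _ = 1 := by rw [hWX,  _root_.map_one]
    refine ⟨isSymp_inv hXs, hWl, ?_⟩
    have hXdvd := isLevel_iff.mp hXl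
    have hWdvd := isLevel_iff.mp hWl
    have hfact : (X - 1) + (X⁻¹ - 1) + (X - 1) * (X⁻¹ - 1) = 0 := by
      have h : (X - 1) + (X⁻¹ - 1) + (X - 1) * (X⁻¹ - 1) = X * X⁻¹ - 1 := by noncomm_ring
      rw [h, hXW, sub_self]
    have hkey : ∀ p q : Idx g, (X⁻¹ - 1) p q
        = -((X - 1) p q) - ((X - 1) * (X⁻¹ - 1)) p q := by
      intro p q
      have h0 : ((X - 1) + (X⁻¹ - 1) + (X - 1) * (X⁻¹ - 1)) p q
          = (0 : Matrix (Idx g) (Idx g) ℤ) p q := by rw [hfact]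
      simp only [Matrix.add_apply, Matrix.zero_apply] at h0
      linarith
    have hprod : ∀ p q : Idx g, (2 * (L : ℤ)) ∣ ((X - 1) * (X⁻¹ - 1)) p q := by
      intro p q
      rw [Matrix.mul_apply]
      exact Finset.dvd_sum fun k _ =>
        dvd_trans h2LLL (mul_dvd_mul (hXdvd p k) (hWdvd k q))
    intro i
    constructor
    · have hne : (Sum.inl i : Idx g) ≠ Sum.inr i := Sum.inl_ne_inr
      rw [← offdiag_entry X⁻¹ hne, hkey]
      refine dvd_sub (dvd_neg.mpr ?_) (hprod _ _)
      rw [offdiag_entry X hne]; exact (hXd i).1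
    · have hne : (Sum.inr i : Idx g) ≠ Sum.inl i := Sum.inr_ne_inl
      rw [← offdiag_entry X⁻¹ hne, hkey]
      refine dvd_sub (dvd_neg.mpr ?_) (hprod _ _)
      rw [offdiag_entry X hne]; exact (hXd i).2
  · -- conjugation
    rintro X Y ⟨hXs, hXl, hXd⟩ hYs
    have hYW : Y * Y⁻¹ = 1 := mul_inv_symp hYs
    have hWY : Y⁻¹ * Y = 1 := inv_mul_symp hYs
    have hXdvd := isLevel_iff.mp hXl
    set M : Matrix (Idx g) (Idx g) ℤ := Matrix.of (fun p q => (X - 1) p q / L) with hM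
    have hA : X - 1 = (L : ℤ) • M := by
      ext p q
      rw [Matrix.smul_apply, hM, Matrix.of_apply, smul_eq_mul]
      exact (Int.mul_ediv_cancel' (hXdvd p q)).symm
    have hMd : ∀ i : Fin g, (2 : ℤ) ∣ M (Sum.inl i) (Sum.inr i) ∧
        (2 : ℤ) ∣ M (Sum.inr i) (Sum.inl i) := by
      intro i
      have hne1 : (Sum.inl i : Idx g) ≠ Sum.inr i := Sum.inl_ne_inr
      have hne2 : (Sum.inr i : Idx g) ≠ Sum.inl i := Sum.inr_ne_inl
      constructor
      · have h1 : (2 * (L : ℤ)) ∣ (X - 1) (Sum.inl i) (Sum.inr i) := by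
          rw [offdiag_entry X hne1]; exact (hXd i).1
        rw [hA, Matrix.smul_apply, smul_eq_mul, mul_comm 2 (L : ℤ)] at h1
        exact (mul_dvd_mul_iff_left hL0).mp h1
      · have h1 : (2 * (L : ℤ)) ∣ (X - 1) (Sum.inr i) (Sum.inl i) := by
          rw [offdiag_entry X hne2]; exact (hXd i).2
        rw [hA, Matrix.smul_apply, smul_eq_mul, mul_comm 2 (L : ℤ)] at h1
        exact (mul_dvd_mul_iff_left hL0).mp h1
    have hArel : (X - 1)ᵀ * Omega g ℤ + Omega g ℤ * (X - 1)
        = -((X - 1)ᵀ * Omega g ℤ * (X - 1)) := by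
      have hexp : (X - 1)ᵀ * Omega g ℤ + Omega g ℤ * (X - 1)
            + (X - 1)ᵀ * Omega g ℤ * (X - 1)
          = Xᵀ * Omega g ℤ * X - Omega g ℤ := by
        rw [Matrix.transpose_sub, Matrix.transpose_one]; noncomm_ring
      have h0 : (X - 1)ᵀ * Omega g ℤ + Omega g ℤ * (X - 1)
          + (X - 1)ᵀ * Omega g ℤ * (X - 1) = 0 := by
        rw [hexp, hXs, sub_self]
      exact eq_neg_of_add_eq_zero_left h0
    have hMrel : ∀ p q : Idx g, (2 : ℤ) ∣ (Mᵀ * Omega g ℤ + Omega g ℤ * M) p q := by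
      set E : Matrix (Idx g) (Idx g) ℤ := Mᵀ * Omega g ℤ + Omega g ℤ * M with hE
      set R0 : Matrix (Idx g) (Idx g) ℤ := (X - 1)ᵀ * Omega g ℤ * (X - 1) with hR0
      intro p q
      have hsm : (L : ℤ) • E = -R0 := by
        rw [hE, hR0, ← hArel, hA, Matrix.transpose_smul, Matrix.smul_mul, Matrix.mul_smul,
          smul_add]
      have hRdvd : ((L : ℤ) * (L : ℤ)) ∣ R0 p q := by
        rw [hR0, Matrix.mul_apply]
        refine Finset.dvd_sum fun k _ => ?_
        refine mul_dvd_mul ?_ (hXdvd k q)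
        rw [Matrix.mul_apply]
        refine Finset.dvd_sum fun r _ => ?_
        exact dvd_mul_of_dvd_left (hXdvd r p) _
      have hentry : (L : ℤ) * (E p q) = -(R0 p q) := by
        have h0 : ((L : ℤ) • E) p q = (-R0) p q := by rw [hsm]
        rw [Matrix.smul_apply, smul_eq_mul, Matrix.neg_apply] at h0
        exact h0
      obtain ⟨c, hc⟩ := hRdvd
      have he : E p q = -((L : ℤ) * c) := by
        apply mul_left_cancel₀ hL0
        rw [hentry, hc]; ring
      rw [he, hlZ]
      exact ⟨-(l * c), by ring⟩
    -- pass to ZMod 2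
    have hΩ2 : (Int.castRingHom (ZMod 2)).mapMatrix (Omega g ℤ) = Omega g (ZMod 2) := by
      rw [RingHom.mapMatrix_apply]; exact omega_map g (ZMod 2)
    have hm2 : ((Int.castRingHom (ZMod 2)).mapMatrix M)ᵀ * Omega g (ZMod 2)
        + Omega g (ZMod 2) * ((Int.castRingHom (ZMod 2)).mapMatrix M) = 0 := by
      have h1 : ((Int.castRingHom (ZMod 2)).mapMatrix M)ᵀ
          = (Int.castRingHom (ZMod 2)).mapMatrix Mᵀ := by
        simp [RingHom.mapMatrix_apply, Matrix.transpose_map]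
      rw [h1, ← hΩ2, ←  _root_.map_mul, ←  _root_.map_mul, ←  _root_.map_add]
      ext p q
      rw [RingHom.mapMatrix_apply, Matrix.map_apply, Matrix.zero_apply,
        Int.coe_castRingHom, ZMod.intCast_zmod_eq_zero_iff_dvd]
      exact_mod_cast hMrel p q
    have hy2 : IsSymp g (ZMod 2) ((Int.castRingHom (ZMod 2)).mapMatrix Y) := isSymp_map hYs
    have hyw2 : (Int.castRingHom (ZMod 2)).mapMatrix Y
        * (Int.castRingHom (ZMod 2)).mapMatrix Y⁻¹ = 1 := by
      rw [←  _root_.map_mul, hYW,  _root_.map_one]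
    have hd2 : ∀ i : Fin g,
        ((Int.castRingHom (ZMod 2)).mapMatrix M) (Sum.inl i) (Sum.inr i) = 0 ∧
        ((Int.castRingHom (ZMod 2)).mapMatrix M) (Sum.inr i) (Sum.inl i) = 0 := by
      intro i
      constructor <;>
        · rw [RingHom.mapMatrix_apply, Matrix.map_apply, Int.coe_castRingHom,
            ZMod.intCast_zmod_eq_zero_iff_dvd]
          first
            | exact_mod_cast (hMd i).1
            | exact_mod_cast (hMd i).2
    have hkey := key_s14 _ _ _ hm2 hy2 hyw2 hd2
    have hconj : ∀ i : Fin g, (2 : ℤ) ∣ (Y * M * Y⁻¹) (Sum.inl i) (Sum.inr i) ∧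
        (2 : ℤ) ∣ (Y * M * Y⁻¹) (Sum.inr i) (Sum.inl i) := by
      intro i
      have hφ : (Int.castRingHom (ZMod 2)).mapMatrix (Y * M * Y⁻¹)
          = (Int.castRingHom (ZMod 2)).mapMatrix Y * (Int.castRingHom (ZMod 2)).mapMatrix M
            * (Int.castRingHom (ZMod 2)).mapMatrix Y⁻¹ := by
        rw [ _root_.map_mul,  _root_.map_mul]
      constructor
      · have h1 := (hkey i).1
        rw [← hφ, RingHom.mapMatrix_apply, Matrix.map_apply, Int.coe_castRingHom,
          ZMod.intCast_zmod_eq_zero_iff_dvd] at h1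
        exact_mod_cast h1
      · have h1 := (hkey i).2
        rw [← hφ, RingHom.mapMatrix_apply, Matrix.map_apply, Int.coe_castRingHom,
          ZMod.intCast_zmod_eq_zero_iff_dvd] at h1
        exact_mod_cast h1
    have hZ1 : Y * X * Y⁻¹ - 1 = (L : ℤ) • (Y * M * Y⁻¹) := by
      have h2 : Y * X * Y⁻¹ - 1 = Y * (X - 1) * Y⁻¹ := by
        have h3 : Y * (X - 1) * Y⁻¹ = Y * X * Y⁻¹ - Y * Y⁻¹ := by noncomm_ring
        rw [h3, hYW]
      rw [h2, hA, Matrix.mul_smul, Matrix.smul_mul]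
    have hZl : IsLevel g L (Y * X * Y⁻¹) := by
      rw [isLevel_iff'] at *
      rw [ _root_.map_mul,  _root_.map_mul, hXl, mul_one, ←  _root_.map_mul, hYW,  _root_.map_one]
    refine ⟨isSymp_mul_s14 (isSymp_mul_s14 hYs hXs) (isSymp_inv hYs), hZl, ?_⟩
    intro i
    constructor
    · have hne : (Sum.inl i : Idx g) ≠ Sum.inr i := Sum.inl_ne_inr
      rw [← offdiag_entry (Y * X * Y⁻¹) hne, hZ1, Matrix.smul_apply, smul_eq_mul]
      obtain ⟨c, hc⟩ := (hconj i).1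
      exact ⟨c, by rw [hc]; ring⟩
    · have hne : (Sum.inr i : Idx g) ≠ Sum.inl i := Sum.inr_ne_inl
      rw [← offdiag_entry (Y * X * Y⁻¹) hne, hZ1, Matrix.smul_apply, smul_eq_mul]
      obtain ⟨c, hc⟩ := (hconj i).2
      exact ⟨c, by rw [hc]; ring⟩
end
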